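/- Let n be a finite index type, B : (n → ℝ) → (n → ℝ) → (n → ℝ) → ℝ a trilinear map, c : n → ℝ a fixed vector, and let (ε_i)_{i ∈ n} be independent real random variables on a probability space, each distributed as a centered Gaussian with variance σ². Then the noisy bispectrum B(c+ε, c+ε, c+ε) is integrable and its expectation equals 𝔼[B(c+ε, c+ε, c+ε)] = B(c, c, c) + σ² · ∑_{i ∈ n} ( B(e_i, e_i, c) + B(e_i, c, e_i) + B(c, e_i, e_i) ), where e_i denotes the i-th standard basis vector. In particular, all first-order terms (linear in ε) and the third-order term B(ε, ε, ε) have zero expectation. -/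

import Mathlib

open MeasureTheory ProbabilityTheory Real

section GaussianMoments

lemma integrable_pow_mul_exp_neg_mul_sq' (k : ℕ) {b : ℝ} (hb : 0 < b) :
    Integrable (fun x : ℝ => x ^ k * Real.exp (-b * x ^ 2)) := by
  have h := integrable_rpow_mul_exp_neg_mul_sq hb (s := (k : ℝ))
    (lt_of_lt_of_le neg_one_lt_zero (Nat.cast_nonneg k))
  simpa [Real.rpow_natCast] using h

lemma integral_sq_mul_exp_neg_mul_sq {b : ℝ} (hb : 0 < b) :
    ∫ x : ℝ, x ^ 2 * Real.exp (-b * x ^ 2) = Real.sqrt π / (2 * b * Real.sqrt b) := by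
  have h1 : ∫ x : ℝ, x ^ 2 * Real.exp (-b * x ^ 2)
      = 2 * ∫ x in Set.Ioi (0:ℝ), x ^ 2 * Real.exp (-b * x ^ 2) := by
    rw [← integral_comp_abs (f := fun x => x ^ 2 * Real.exp (-b * x ^ 2))]
    congr 1; funext x; rw [sq_abs]
  have h2 : ∫ x in Set.Ioi (0:ℝ), x ^ 2 * Real.exp (-b * x ^ 2)
      = ∫ t in Set.Ioi (0:ℝ), (1/2) * (t ^ ((3:ℝ)/2 - 1) * Real.exp (-(b * t))) := by
    rw [← integral_comp_rpow_Ioi_of_pos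
      (g := fun t => (1/2) * (t ^ ((3:ℝ)/2 - 1) * Real.exp (-(b * t)))) (two_pos)]
    refine setIntegral_congr_fun measurableSet_Ioi (fun x hx => ?_)
    have hx0 : (0:ℝ) < x := hx
    have e1 : x ^ ((2:ℝ)) = x ^ (2:ℕ) := by
      rw [← Real.rpow_natCast x 2]; norm_num
    rw [smul_eq_mul, e1]
    have e2 : ((x:ℝ) ^ (2:ℕ)) ^ ((3:ℝ)/2 - 1) = x := by
      rw [← Real.rpow_natCast x 2, ← Real.rpow_mul hx0.le]
      norm_num
    rw [e2]
    have e3 : x ^ ((2:ℝ) - 1) = x := by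
      norm_num
    rw [e3]
    ring_nf
  have h3 : ∫ t in Set.Ioi (0:ℝ), t ^ ((3:ℝ)/2 - 1) * Real.exp (-(b * t))
      = (1/b) ^ ((3:ℝ)/2) * Real.Gamma ((3:ℝ)/2) := by
    exact integral_rpow_mul_exp_neg_mul_Ioi (by norm_num) hb
  have hG : Real.Gamma ((3:ℝ)/2) = Real.sqrt π / 2 := by
    have h32 : ((3:ℝ)/2) = 1/2 + 1 := by norm_num
    rw [h32, Real.Gamma_add_one (by norm_num), Real.Gamma_one_half_eq]; ring
  rw [h1, h2, integral_const_mul, h3, hG]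
  have hb' : (0:ℝ) < 1/b := by positivity
  have e4 : ((1:ℝ)/b) ^ ((3:ℝ)/2) = (1/b) * Real.sqrt (1/b) := by
    have : ((3:ℝ)/2) = 1 + 1/2 := by norm_num
    rw [this, Real.rpow_add hb', Real.rpow_one, ← Real.sqrt_eq_rpow]
  rw [e4, Real.sqrt_div' 1 hb.le]
  have hsb : Real.sqrt b ≠ 0 := by positivity
  field_simp
  ring

lemma integral_fun_gaussianReal {v : NNReal} (hv : v ≠ 0) (g : ℝ → ℝ) :
    ∫ x, g x ∂(gaussianReal 0 v) = ∫ x, gaussianPDFReal 0 v x * g x := by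
  rw [gaussianReal_of_var_ne_zero 0 hv]
  have h : gaussianPDF 0 v = fun x => ((Real.toNNReal (gaussianPDFReal 0 v x) : NNReal) : ENNReal) := rfl
  rw [h, integral_withDensity_eq_integral_smul ((measurable_gaussianPDFReal 0 v).real_toNNReal) g]
  congr 1; funext x
  rw [NNReal.smul_def, smul_eq_mul, Real.coe_toNNReal _ (gaussianPDFReal_nonneg 0 v x)]

lemma integrable_fun_gaussianReal {v : NNReal} (hv : v ≠ 0) (g : ℝ → ℝ) :
    Integrable g (gaussianReal 0 v)
      ↔ Integrable (fun x => gaussianPDFReal 0 v x * g x) := by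
  rw [gaussianReal_of_var_ne_zero 0 hv]
  have h : gaussianPDF 0 v = fun x => ((Real.toNNReal (gaussianPDFReal 0 v x) : NNReal) : ENNReal) := rfl
  rw [h, integrable_withDensity_iff_integrable_coe_smul
    ((measurable_gaussianPDFReal 0 v).real_toNNReal)]
  constructor <;> intro hh <;> refine hh.congr (Filter.Eventually.of_forall fun x => ?_) <;>
    simp [NNReal.smul_def, Real.coe_toNNReal _ (gaussianPDFReal_nonneg 0 v x)]

lemma gaussianPDFReal_eq (v : NNReal) (x : ℝ) :
    gaussianPDFReal 0 v x
      = (Real.sqrt (2 * π * v))⁻¹ * Real.exp (-(2 * (v:ℝ))⁻¹ * x ^ 2) := by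
  rw [gaussianPDFReal]
  congr 1
  rw [sub_zero]
  ring_nf

lemma integrable_pow_gaussianReal (v : NNReal) (k : ℕ) :
    Integrable (fun x : ℝ => x ^ k) (gaussianReal 0 v) := by
  by_cases hv : v = 0
  · subst hv
    rw [gaussianReal_zero_var]
    exact (integrable_congr (ae_eq_dirac (fun x : ℝ => x ^ k))).2 (integrable_const _)
  · rw [integrable_fun_gaussianReal hv]
    have hb : (0:ℝ) < (2 * (v:ℝ))⁻¹ := by
      have : (0:ℝ) < (v:ℝ) := by exact_mod_cast pos_iff_ne_zero.2 hv
      positivity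
    have heq : (fun x : ℝ => gaussianPDFReal 0 v x * x ^ k)
        = fun x => (Real.sqrt (2 * π * v))⁻¹ * (x ^ k * Real.exp (-(2 * (v:ℝ))⁻¹ * x ^ 2)) := by
      funext x; rw [gaussianPDFReal_eq]; ring
    rw [heq]
    exact (integrable_pow_mul_exp_neg_mul_sq' k hb).const_mul _

lemma integral_odd_pow_gaussianReal (v : NNReal) {k : ℕ} (hk : Odd k) :
    ∫ x, x ^ k ∂(gaussianReal 0 v) = 0 := by
  by_cases hv : v = 0
  · subst hv
    rw [gaussianReal_zero_var, integral_dirac]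
    exact zero_pow hk.pos.ne'
  · rw [integral_fun_gaussianReal hv]
    set f : ℝ → ℝ := fun x => gaussianPDFReal 0 v x * x ^ k with hf
    have hodd : ∀ x, f (-x) = - f x := by
      intro x
      simp only [hf, gaussianPDFReal_eq, neg_sq, hk.neg_pow]
      ring
    have h1 : ∫ x, f (-x) = ∫ x, f x := integral_neg_eq_self f volume
    have h2 : ∫ x, f x = - ∫ x, f x := by
      conv_lhs => rw [← h1]
      simp only [hodd]
      rw [integral_neg]
    linarith

lemma integral_sq_gaussianReal (v : NNReal) :
    ∫ x, x ^ 2 ∂(gaussianReal 0 v) = (v : ℝ) := by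
  by_cases hv : v = 0
  · subst hv
    rw [gaussianReal_zero_var, integral_dirac]
    simp
  · have hv' : (0:ℝ) < (v:ℝ) := by exact_mod_cast pos_iff_ne_zero.2 hv
    have hb : (0:ℝ) < (2 * (v:ℝ))⁻¹ := by positivity
    rw [integral_fun_gaussianReal hv]
    have heq : (fun x : ℝ => gaussianPDFReal 0 v x * x ^ 2)
        = fun x => (Real.sqrt (2 * π * v))⁻¹ * (x ^ 2 * Real.exp (-(2 * (v:ℝ))⁻¹ * x ^ 2)) := by
      funext x; rw [gaussianPDFReal_eq]; ring
    rw [heq, integral_const_mul, integral_sq_mul_exp_neg_mul_sq hb]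
    have h2v : (0:ℝ) < 2 * (v:ℝ) := by positivity
    rw [Real.sqrt_inv]
    have h2pv : Real.sqrt (2 * π * (v:ℝ)) = Real.sqrt π * Real.sqrt (2 * v) := by
      rw [show 2 * π * (v:ℝ) = π * (2 * v) by ring, Real.sqrt_mul Real.pi_pos.le]
    rw [h2pv]
    have hs2v : (0:ℝ) < Real.sqrt (2 * v) := Real.sqrt_pos.2 h2v
    have hsp : (0:ℝ) < Real.sqrt π := Real.sqrt_pos.2 Real.pi_pos
    field_simp

end GaussianMoments

/-- **Expected bispectrum under additive i.i.d. centered Gaussian noise.**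
For a trilinear map `B` on `n → ℝ`, a fixed vector `c`, and independent
centered Gaussian random variables `ε i` of variance `σ²`, the noisy
bispectrum `B (c+ε) (c+ε) (c+ε)` is integrable with expectation
`B c c c + σ² ∑ i (B eᵢ eᵢ c + B eᵢ c eᵢ + B c eᵢ eᵢ)`; in particular
all first-order terms and the third-order term have zero expectation. -/
theorem expected_noisy_bispectrum
    {n : Type*} [Fintype n] [DecidableEq n]
    (B : (n → ℝ) →ₗ[ℝ] (n → ℝ) →ₗ[ℝ] (n → ℝ) →ₗ[ℝ] ℝ)
    (c : n → ℝ)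
    {Ω : Type*} [MeasurableSpace Ω] (μ : Measure Ω) [IsProbabilityMeasure μ]
    (ε : n → Ω → ℝ)
    (hmeas : ∀ i, Measurable (ε i))
    (hindep : iIndepFun ε μ)
    (σ2 : NNReal)
    (hgauss : ∀ i, Measure.map (ε i) μ = gaussianReal 0 σ2) :
    Integrable
        (fun ω => B (fun j => c j + ε j ω) (fun j => c j + ε j ω)
          (fun j => c j + ε j ω)) μ ∧
    (∫ ω, B (fun j => c j + ε j ω) (fun j => c j + ε j ω)
        (fun j => c j + ε j ω) ∂μ)
      = B c c c
        + (σ2 : ℝ) * ∑ i : n,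
            (B (Pi.single i 1) (Pi.single i 1) c
              + B (Pi.single i 1) c (Pi.single i 1)
              + B c (Pi.single i 1) (Pi.single i 1)) ∧
    (∫ ω, B (fun j => ε j ω) c c ∂μ) = 0 ∧
    (∫ ω, B c (fun j => ε j ω) c ∂μ) = 0 ∧
    (∫ ω, B c c (fun j => ε j ω) ∂μ) = 0 ∧
    (∫ ω, B (fun j => ε j ω) (fun j => ε j ω) (fun j => ε j ω) ∂μ) = 0 := by
  classical
  have hae : ∀ i, AEMeasurable (ε i) μ := fun i => (hmeas i).aemeasurable
  -- all powers of each ε i are integrable and have gaussian moments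
  have hI : ∀ (i : n) (k : ℕ), Integrable (fun ω => (ε i ω) ^ k) μ := by
    intro i k
    have h : Integrable (fun x : ℝ => x ^ k) (Measure.map (ε i) μ) := by
      rw [hgauss i]; exact integrable_pow_gaussianReal σ2 k
    have hsm : AEStronglyMeasurable (fun x : ℝ => x ^ k) (Measure.map (ε i) μ) :=
      (by fun_prop : Measurable fun x : ℝ => x ^ k).aestronglyMeasurable
    exact (integrable_map_measure hsm (hae i)).mp h
  have hEk : ∀ (i : n) (k : ℕ), ∫ ω, (ε i ω) ^ k ∂μ = ∫ x, x ^ k ∂(gaussianReal 0 σ2) := by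
    intro i k
    have hsm : AEStronglyMeasurable (fun x : ℝ => x ^ k) (Measure.map (ε i) μ) :=
      (by fun_prop : Measurable fun x : ℝ => x ^ k).aestronglyMeasurable
    rw [← hgauss i]
    exact (integral_map (hae i) hsm).symm
  have hI1 : ∀ i, Integrable (ε i) μ := fun i => by simpa using hI i 1
  have hE1 : ∀ i, ∫ ω, ε i ω ∂μ = 0 := by
    intro i
    have h := (hEk i 1).trans (integral_odd_pow_gaussianReal σ2 odd_one)
    simpa using h
  -- pairwise products
  have hIp : ∀ i j, Integrable (fun ω => ε i ω * ε j ω) μ := by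
    intro i j
    by_cases hij : i = j
    · subst hij; simpa [sq] using hI i 2
    · exact (hindep.indepFun hij).integrable_mul (hI1 i) (hI1 j)
  have hEp : ∀ i j, ∫ ω, ε i ω * ε j ω ∂μ = if i = j then (σ2:ℝ) else 0 := by
    intro i j
    by_cases hij : i = j
    · subst hij
      rw [if_pos rfl]
      have h := (hEk i 2).trans (integral_sq_gaussianReal σ2)
      simpa [sq] using h
    · rw [if_neg hij]
      have h := (hindep.indepFun hij).integral_mul_eq_mul_integral (hI1 i).aestronglyMeasurable (hI1 j).aestronglyMeasurable
      rw [hE1 i, zero_mul] at h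
      exact h
  -- triple products
  have htriple : ∀ i j k, Integrable (fun ω => ε i ω * ε j ω * ε k ω) μ ∧
      ∫ ω, ε i ω * ε j ω * ε k ω ∂μ = 0 := by
    intro i j k
    by_cases hij : i = j
    · subst hij
      by_cases hik : i = k
      · subst hik
        have heq : (fun ω => ε i ω * ε i ω * ε i ω) = fun ω => (ε i ω) ^ 3 :=
          funext fun ω => by ring
        refine ⟨by rw [heq]; exact hI i 3, ?_⟩
        rw [heq, hEk i 3, integral_odd_pow_gaussianReal σ2 ⟨1, by norm_num⟩]
      · have hind : IndepFun (fun ω => (ε i ω) ^ 2) (ε k) μ :=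
          (hindep.indepFun hik).comp (measurable_id.pow_const 2) measurable_id
        have heq : (fun ω => ε i ω * ε i ω * ε k ω) = fun ω => (ε i ω) ^ 2 * ε k ω :=
          funext fun ω => by ring
        have h := hind.integral_mul_eq_mul_integral (hI i 2).aestronglyMeasurable (hI1 k).aestronglyMeasurable
        rw [hE1 k, mul_zero] at h
        exact ⟨by rw [heq]; exact hind.integrable_mul (hI i 2) (hI1 k),
          by rw [heq]; exact h⟩
    · by_cases hjk : j = k
      · subst hjk
        have hind : IndepFun (fun ω => (ε j ω) ^ 2) (ε i) μ :=
          (hindep.indepFun (Ne.symm hij)).comp (measurable_id.pow_const 2) measurable_id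
        have heq : (fun ω => ε i ω * ε j ω * ε j ω) = fun ω => (ε j ω) ^ 2 * ε i ω :=
          funext fun ω => by ring
        have h := hind.integral_mul_eq_mul_integral (hI j 2).aestronglyMeasurable (hI1 i).aestronglyMeasurable
        rw [hE1 i, mul_zero] at h
        exact ⟨by rw [heq]; exact hind.integrable_mul (hI j 2) (hI1 i),
          by rw [heq]; exact h⟩
      · by_cases hik : i = k
        · subst hik
          have hind : IndepFun (fun ω => (ε i ω) ^ 2) (ε j) μ :=
            (hindep.indepFun hij).comp (measurable_id.pow_const 2) measurable_id
          have heq : (fun ω => ε i ω * ε j ω * ε i ω) = fun ω => (ε i ω) ^ 2 * ε j ω :=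
            funext fun ω => by ring
          have h := hind.integral_mul_eq_mul_integral (hI i 2).aestronglyMeasurable (hI1 j).aestronglyMeasurable
          rw [hE1 j, mul_zero] at h
          exact ⟨by rw [heq]; exact hind.integrable_mul (hI i 2) (hI1 j),
            by rw [heq]; exact h⟩
        · -- all distinct
          have hk : k ∉ ({i, j} : Finset n) := by
            simp only [Finset.mem_insert, Finset.mem_singleton]
            push_neg
            exact ⟨fun h => hik h.symm, fun h => hjk h.symm⟩
          have hind : IndepFun (∏ l ∈ ({i, j} : Finset n), ε l) (ε k) μ :=
            hindep.indepFun_finsetProd_of_notMem hmeas hk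
          rw [Finset.prod_pair hij] at hind
          have hint : Integrable (ε i * ε j) μ := hIp i j
          have h := hind.integral_mul_eq_mul_integral hint.aestronglyMeasurable (hI1 k).aestronglyMeasurable
          rw [hE1 k, mul_zero] at h
          exact ⟨hind.integrable_mul hint (hI1 k), h⟩
  -- decomposition of the noise vector in the standard basis
  have hxd : ∀ ω : Ω, (fun j => ε j ω) = (∑ i, ε i ω • (Pi.single i 1 : n → ℝ) : n → ℝ) := by
    intro ω; funext j
    rw [Finset.sum_apply]
    simp [Pi.single_apply]
  -- expansions
  have expand1 : ∀ (ω : Ω) (a b : n → ℝ),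
      B (fun j => ε j ω) a b = ∑ i, ε i ω * B (Pi.single i 1) a b := by
    intro ω a b; rw [hxd ω]
    simp [map_sum, LinearMap.sum_apply, LinearMap.smul_apply]
  have expand2 : ∀ (ω : Ω) (a b : n → ℝ),
      B a (fun j => ε j ω) b = ∑ i, ε i ω * B a (Pi.single i 1) b := by
    intro ω a b; rw [hxd ω]
    simp [map_sum, LinearMap.sum_apply, LinearMap.smul_apply]
  have expand3 : ∀ (ω : Ω) (a b : n → ℝ),
      B a b (fun j => ε j ω) = ∑ i, ε i ω * B a b (Pi.single i 1) := by
    intro ω a b; rw [hxd ω]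
    simp [map_sum, LinearMap.sum_apply, LinearMap.smul_apply]
  -- integrals of the linear pieces
  have hIlin : ∀ (v : n → ℝ), Integrable (fun ω => ∑ i, ε i ω * v i) μ := fun v =>
    integrable_finset_sum _ (fun i _ => (hI1 i).mul_const (v i))
  have hElin : ∀ (v : n → ℝ), ∫ ω, ∑ i, ε i ω * v i ∂μ = 0 := by
    intro v
    rw [integral_finset_sum _ (fun i _ => (hI1 i).mul_const (v i))]
    simp [integral_mul_const, hE1]
  -- integrals of the quadratic pieces
  have hIq : ∀ (v : n → n → ℝ),
      Integrable (fun ω => ∑ i, ∑ j, (ε i ω * ε j ω) * v i j) μ := fun v =>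
    integrable_finset_sum _ fun i _ =>
      integrable_finset_sum _ fun j _ => (hIp i j).mul_const _
  have hEq : ∀ (v : n → n → ℝ),
      ∫ ω, ∑ i, ∑ j, (ε i ω * ε j ω) * v i j ∂μ = (σ2:ℝ) * ∑ i, v i i := by
    intro v
    rw [integral_finset_sum _ (fun i _ =>
      integrable_finset_sum _ fun j _ => (hIp i j).mul_const _)]
    have h : ∀ i, ∫ ω, ∑ j, (ε i ω * ε j ω) * v i j ∂μ
        = ∑ j, (if i = j then (σ2:ℝ) else 0) * v i j := by
      intro i
      rw [integral_finset_sum _ (fun j _ => (hIp i j).mul_const _)]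
      exact Finset.sum_congr rfl fun j _ => by rw [integral_mul_const, hEp i j]
    simp only [h]
    rw [Finset.mul_sum]
    refine Finset.sum_congr rfl fun i _ => ?_
    simp [ite_mul, Finset.sum_ite_eq]
  -- integrals of the cubic piece
  have hIcub : ∀ (v : n → n → n → ℝ),
      Integrable (fun ω => ∑ i, ∑ j, ∑ k, (ε i ω * ε j ω * ε k ω) * v i j k) μ := fun v =>
    integrable_finset_sum _ fun i _ => integrable_finset_sum _ fun j _ =>
      integrable_finset_sum _ fun k _ => (htriple i j k).1.mul_const _
  have hEcub : ∀ (v : n → n → n → ℝ),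
      ∫ ω, ∑ i, ∑ j, ∑ k, (ε i ω * ε j ω * ε k ω) * v i j k ∂μ = 0 := by
    intro v
    rw [integral_finset_sum _ (fun i _ => integrable_finset_sum _ fun j _ =>
      integrable_finset_sum _ fun k _ => (htriple i j k).1.mul_const _)]
    refine Finset.sum_eq_zero fun i _ => ?_
    rw [integral_finset_sum _ (fun j _ =>
      integrable_finset_sum _ fun k _ => (htriple i j k).1.mul_const _)]
    refine Finset.sum_eq_zero fun j _ => ?_
    rw [integral_finset_sum _ (fun k _ => (htriple i j k).1.mul_const _)]
    refine Finset.sum_eq_zero fun k _ => ?_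
    rw [integral_mul_const, (htriple i j k).2, zero_mul]
  -- main expansion
  have hmain : (fun ω => B (fun j => c j + ε j ω) (fun j => c j + ε j ω)
        (fun j => c j + ε j ω))
      = fun ω => B c c c
          + (∑ i, ε i ω * B (Pi.single i 1) c c)
          + (∑ i, ε i ω * B c (Pi.single i 1) c)
          + (∑ i, ε i ω * B c c (Pi.single i 1))
          + (∑ i, ∑ j, (ε i ω * ε j ω) * B (Pi.single i 1) (Pi.single j 1) c)
          + (∑ i, ∑ j, (ε i ω * ε j ω) * B (Pi.single i 1) c (Pi.single j 1))
          + (∑ i, ∑ j, (ε i ω * ε j ω) * B c (Pi.single i 1) (Pi.single j 1))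
          + (∑ i, ∑ j, ∑ k, (ε i ω * ε j ω * ε k ω)
              * B (Pi.single i 1) (Pi.single j 1) (Pi.single k 1)) := by
    funext ω
    have hc : (fun j => c j + ε j ω) = c + (fun j => ε j ω) := rfl
    rw [hc]
    simp only [map_add, LinearMap.add_apply, expand1 ω, expand2 ω, expand3 ω,
      Finset.mul_sum, mul_assoc]
    ring
  have hcub3 : (fun ω => B (fun j => ε j ω) (fun j => ε j ω) (fun j => ε j ω))
      = fun ω => ∑ i, ∑ j, ∑ k, (ε i ω * ε j ω * ε k ω)
          * B (Pi.single i 1) (Pi.single j 1) (Pi.single k 1) := by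
    funext ω
    simp only [expand1 ω, expand2 ω, expand3 ω, Finset.mul_sum, mul_assoc]
  have I0 : Integrable (fun _ : Ω => B c c c) μ := integrable_const _
  have I1 : Integrable (fun ω => ∑ i, ε i ω * B (Pi.single i 1) c c) μ := hIlin _
  have I2 : Integrable (fun ω => ∑ i, ε i ω * B c (Pi.single i 1) c) μ := hIlin _
  have I3 : Integrable (fun ω => ∑ i, ε i ω * B c c (Pi.single i 1)) μ := hIlin _
  have I4 : Integrable
      (fun ω => ∑ i, ∑ j, (ε i ω * ε j ω) * B (Pi.single i 1) (Pi.single j 1) c) μ := hIq _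
  have I5 : Integrable
      (fun ω => ∑ i, ∑ j, (ε i ω * ε j ω) * B (Pi.single i 1) c (Pi.single j 1)) μ := hIq _
  have I6 : Integrable
      (fun ω => ∑ i, ∑ j, (ε i ω * ε j ω) * B c (Pi.single i 1) (Pi.single j 1)) μ := hIq _
  have I7 : Integrable
      (fun ω => ∑ i, ∑ j, ∑ k, (ε i ω * ε j ω * ε k ω)
        * B (Pi.single i 1) (Pi.single j 1) (Pi.single k 1)) μ := hIcub _
  have J1 : Integrable (fun ω => B c c c
      + (∑ i, ε i ω * B (Pi.single i 1) c c)) μ := I0.add I1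
  have J2 : Integrable (fun ω => B c c c
      + (∑ i, ε i ω * B (Pi.single i 1) c c)
      + (∑ i, ε i ω * B c (Pi.single i 1) c)) μ := J1.add I2
  have J3 : Integrable (fun ω => B c c c
      + (∑ i, ε i ω * B (Pi.single i 1) c c)
      + (∑ i, ε i ω * B c (Pi.single i 1) c)
      + (∑ i, ε i ω * B c c (Pi.single i 1))) μ := J2.add I3
  have J4 : Integrable (fun ω => B c c c
      + (∑ i, ε i ω * B (Pi.single i 1) c c)
      + (∑ i, ε i ω * B c (Pi.single i 1) c)
      + (∑ i, ε i ω * B c c (Pi.single i 1))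
      + (∑ i, ∑ j, (ε i ω * ε j ω) * B (Pi.single i 1) (Pi.single j 1) c)) μ := J3.add I4
  have J5 : Integrable (fun ω => B c c c
      + (∑ i, ε i ω * B (Pi.single i 1) c c)
      + (∑ i, ε i ω * B c (Pi.single i 1) c)
      + (∑ i, ε i ω * B c c (Pi.single i 1))
      + (∑ i, ∑ j, (ε i ω * ε j ω) * B (Pi.single i 1) (Pi.single j 1) c)
      + (∑ i, ∑ j, (ε i ω * ε j ω) * B (Pi.single i 1) c (Pi.single j 1))) μ := J4.add I5
  have J6 : Integrable (fun ω => B c c c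
      + (∑ i, ε i ω * B (Pi.single i 1) c c)
      + (∑ i, ε i ω * B c (Pi.single i 1) c)
      + (∑ i, ε i ω * B c c (Pi.single i 1))
      + (∑ i, ∑ j, (ε i ω * ε j ω) * B (Pi.single i 1) (Pi.single j 1) c)
      + (∑ i, ∑ j, (ε i ω * ε j ω) * B (Pi.single i 1) c (Pi.single j 1))
      + (∑ i, ∑ j, (ε i ω * ε j ω) * B c (Pi.single i 1) (Pi.single j 1))) μ := J5.add I6
  refine ⟨?_, ?_, ?_, ?_, ?_, ?_⟩
  · rw [hmain]
    exact J6.add I7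
  · rw [hmain, integral_add J6 I7, integral_add J5 I6, integral_add J4 I5,
      integral_add J3 I4, integral_add J2 I3, integral_add J1 I2, integral_add I0 I1,
      integral_const, hElin, hElin, hElin, hEq, hEq, hEq, hEcub]
    simp only [measure_univ, probReal_univ, ENNReal.toReal_one, smul_eq_mul, add_zero]
    rw [Finset.sum_add_distrib, Finset.sum_add_distrib]
    ring
  · simp only [expand1]
    exact hElin _
  · simp only [expand2]
    exact hElin _
  · simp only [expand3]
    exact hElin _
  · rw [hcub3]
    exact hEcub _
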